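/- Let K be a field of characteristic 0, n ≥ 2, and P = K[x₁,…,xₙ]. Let D be a derivation of P with coefficients f^k = D(x_k). Suppose the f^k satisfy the system of second-order differential equations: ∂ᵢ∂ⱼ(f^k) = 0 for all i, j, k with i ≠ k and j ≠ k; and (1/2)∂_k∂_k(f^k) = ∂ᵢ∂_k(f^i) for all i ≠ k. Then there exist scalars a_k, b_{kj}, c_j ∈ K such that f^k = a_k + Σⱼ b_{kj} xⱼ + x_k·(Σⱼ cⱼ xⱼ) for every k. Conversely, every derivation with coefficients of this form satisfies the system. Hence the solution space of the system is the (n² + 2n)-dimensional subalgebra of polynomial vector fields spanned by ∂ᵢ, xⁱ∂ⱼ, and xⁱE (where E = Σⱼ xⱼ∂ⱼ), i.e., the standard realization of sl(n+1) by vector fields on n-dimensional space. -/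

import Mathlib

open MvPolynomial


lemma my_coeff_pderiv {σ K : Type*} [DecidableEq σ] [CommSemiring K]
    (i : σ) (m : σ →₀ ℕ) (p : MvPolynomial σ K) :
    coeff m (pderiv i p) = (m i + 1 : ℕ) * coeff (m + Finsupp.single i 1) p := by
  induction p using MvPolynomial.induction_on' with
  | monomial s a =>
    rw [pderiv_monomial, coeff_monomial, coeff_monomial]
    rcases Nat.eq_zero_or_pos (s i) with hsi | hsi
    · split_ifs with h h' h'
      · exfalso; have := congrArg (fun f : σ →₀ ℕ => f i) h'; simp [hsi] at this
      · simp [hsi]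
      · exfalso; have := congrArg (fun f : σ →₀ ℕ => f i) h'; simp [hsi] at this
      · ring
    · by_cases h : s = m + Finsupp.single i 1
      · subst h
        rw [if_pos (by simp)]
        simp [mul_comm]
      · rw [if_neg h, if_neg ?_]
        · ring
        · intro he
          apply h
          have hle : Finsupp.single i 1 ≤ s := by
            rw [Finsupp.single_le_iff]; omega
          rw [← tsub_add_cancel_of_le hle, he]
  | add p q hp hq =>
    simp [map_add, coeff_add, hp, hq, mul_add]

lemma my_pderiv_comm {σ K : Type*} [DecidableEq σ] [CommSemiring K]
    (i j : σ) (p : MvPolynomial σ K) :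
    pderiv i (pderiv j p) = pderiv j (pderiv i p) := by
  ext m
  rw [my_coeff_pderiv, my_coeff_pderiv, my_coeff_pderiv, my_coeff_pderiv]
  have hm : m + Finsupp.single i 1 + Finsupp.single j 1
      = m + Finsupp.single j 1 + Finsupp.single i 1 := by
    rw [add_assoc, add_assoc, add_comm (Finsupp.single i 1)]
  rw [hm]
  by_cases hij : i = j
  · subst hij; ring
  · simp [Finsupp.single_apply, hij, Ne.symm hij]
    ring

lemma my_eq_C {σ K : Type*} [DecidableEq σ] [Field K] [CharZero K]
    (p : MvPolynomial σ K) (h : ∀ i, pderiv i p = 0) :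
    p = C (coeff 0 p) := by
  ext m
  by_cases hm : m = 0
  · subst hm; simp
  · obtain ⟨i, hi⟩ : ∃ i, m i ≠ 0 := by
      by_contra hc
      push_neg at hc
      exact hm (Finsupp.ext hc)
    have hkey := my_coeff_pderiv i (m - Finsupp.single i 1) p
    rw [h i] at hkey
    have hms : (m - Finsupp.single i 1) + Finsupp.single i 1 = m :=
      tsub_add_cancel_of_le (Finsupp.single_le_iff.mpr (Nat.one_le_iff_ne_zero.mpr hi))
    rw [hms] at hkey
    simp only [coeff_zero] at hkey
    have hne : ∀ t : ℕ, ((t + 1 : ℕ) : K) ≠ 0 := by intro t; push_cast; exact Nat.cast_add_one_ne_zero t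
    have : coeff m p = 0 := by
      rcases mul_eq_zero.mp hkey.symm with h' | h'
      · exact absurd h' (hne _)
      · exact h'
    rw [this, coeff_C, if_neg (fun he => hm he.symm)]

lemma my_pderiv_linear {n : ℕ} {K : Type*} [Field K]
    (c : Fin n → K) (j : Fin n) :
    pderiv j (∑ m, C (c m) * X m : MvPolynomial (Fin n) K) = C (c j) := by
  rw [map_sum, Finset.sum_eq_single j]
  · rw [pderiv_C_mul, pderiv_X_self, mul_one]
  · intro m _ hm
    rw [pderiv_C_mul, pderiv_X_of_ne hm, mul_zero]
  · simp

lemma my_affine {n : ℕ} {K : Type*} [Field K] [CharZero K]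
    (p : MvPolynomial (Fin n) K) (h : ∀ i j, pderiv i (pderiv j p) = 0) :
    p = C (coeff 0 p) + ∑ j, C (coeff 0 (pderiv j p)) * X j := by
  have hb : ∀ j, pderiv j p = C (coeff 0 (pderiv j p)) :=
    fun j => my_eq_C _ (fun i => h i j)
  have hr : ∀ i, pderiv i (p - ∑ j, C (coeff 0 (pderiv j p)) * X j) = 0 := by
    intro i
    rw [map_sub, my_pderiv_linear, sub_eq_zero]
    exact hb i
  have h0 := my_eq_C _ hr
  have hc0 : coeff 0 (p - ∑ j, C (coeff 0 (pderiv j p)) * X j) = coeff 0 p := by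
    simp [MvPolynomial.coeff_sum, coeff_C_mul]
  rw [hc0] at h0
  linear_combination h0

lemma my_pderiv_pderiv_X {n : ℕ} {K : Type*} [Field K] (i j k : Fin n) :
    pderiv i (pderiv j (X k : MvPolynomial (Fin n) K)) = 0 := by
  rcases eq_or_ne k j with h | h
  · subst h; rw [pderiv_X_self]; simp
  · rw [pderiv_X_of_ne h, map_zero]


/-- the coefficients `fᵏ = D(xₖ)` of a polynomial vector field `D`
satisfy the system `∂ᵢ∂ⱼ(fᵏ) = 0` (for `i, j ≠ k`) and
`(1/2)∂ₖ∂ₖ(fᵏ) = ∂ᵢ∂ₖ(fⁱ)` (for `i ≠ k`) iff there are scalars `aₖ, b_{kj}, cⱼ`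
with `fᵏ = aₖ + Σⱼ b_{kj} xⱼ + xₖ·(Σⱼ cⱼ xⱼ)` for every `k`; i.e., the solution
space is the `(n² + 2n)`-dimensional subalgebra spanned by `∂ᵢ`, `xⁱ∂ⱼ` and
`xⁱE` — the standard realization of `sl(n+1)` by vector fields. -/
theorem sl_realization_differential_equations
    {K : Type*} [Field K] [CharZero K] (n : ℕ) (hn : 2 ≤ n)
    (D : Derivation K (MvPolynomial (Fin n) K) (MvPolynomial (Fin n) K)) :
    ((∀ i j k : Fin n, i ≠ k → j ≠ k →
        pderiv i (pderiv j (D (X k))) = 0) ∧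
     (∀ i k : Fin n, i ≠ k →
        C ((2 : K)⁻¹) * pderiv k (pderiv k (D (X k)))
          = pderiv i (pderiv k (D (X i)))))
    ↔ ∃ (a : Fin n → K) (b : Fin n → Fin n → K) (c : Fin n → K),
        ∀ k, D (X k)
          = C (a k) + (∑ j, C (b k j) * X j) + X k * (∑ j, C (c j) * X j) := by
  constructor
  · rintro ⟨h1, h2⟩
    have hnt : Nontrivial (Fin n) := ⟨⟨⟨0, by omega⟩, ⟨1, by omega⟩, by simp [Fin.ext_iff]⟩⟩
    -- all partials of (1/2)∂ₖ∂ₖ fᵏ vanish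
    have hqzero : ∀ k j : Fin n,
        pderiv j (C ((2:K)⁻¹) * pderiv k (pderiv k (D (X k)))) = 0 := by
      intro k j
      by_cases hjk : j = k
      · subst hjk
        obtain ⟨i, hik⟩ := exists_ne j
        rw [h2 i j hik, my_pderiv_comm j i, h1 j j i (Ne.symm hik) (Ne.symm hik), map_zero]
      · have hr1 : pderiv j (C ((2:K)⁻¹) * pderiv k (pderiv k (D (X k))))
            = C ((2:K)⁻¹) * pderiv k (C ((2:K)⁻¹) * pderiv j (pderiv j (D (X j)))) := by
          rw [pderiv_C_mul, my_pderiv_comm j k, my_pderiv_comm j k, ← h2 k j (Ne.symm hjk)]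
        have hr2 : pderiv k (C ((2:K)⁻¹) * pderiv j (pderiv j (D (X j))))
            = C ((2:K)⁻¹) * pderiv j (C ((2:K)⁻¹) * pderiv k (pderiv k (D (X k)))) := by
          rw [pderiv_C_mul, my_pderiv_comm k j, my_pderiv_comm k j, ← h2 j k hjk]
        rw [hr2] at hr1
        have hz : ((1 : MvPolynomial (Fin n) K) - C ((2:K)⁻¹) * C ((2:K)⁻¹)) *
            pderiv j (C ((2:K)⁻¹) * pderiv k (pderiv k (D (X k)))) = 0 := by
          linear_combination hr1
        rcases mul_eq_zero.mp hz with h' | h'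
        · exfalso
          rw [show (1 : MvPolynomial (Fin n) K) = C (1:K) from (C_1).symm, ← C_mul, ← C_sub,
            C_eq_zero] at h'
          norm_num at h'
        · exact h'
    obtain ⟨c, hc⟩ : ∃ c : Fin n → K, ∀ k,
        C ((2:K)⁻¹) * pderiv k (pderiv k (D (X k))) = C (c k) :=
      ⟨_, fun k => my_eq_C _ (hqzero k)⟩
    have F1 : ∀ k, pderiv k (pderiv k (D (X k))) = C (c k) + C (c k) := by
      intro k
      have h' : C ((2:K)) * (C ((2:K)⁻¹) * pderiv k (pderiv k (D (X k))))
          = C ((2:K)) * C (c k) := by rw [hc k]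
      rw [← mul_assoc, ← C_mul, mul_inv_cancel₀ (two_ne_zero), C_1, one_mul,
        ← C_mul, two_mul, C_add] at h'
      exact h'
    have F2 : ∀ i k : Fin n, i ≠ k → pderiv i (pderiv k (D (X k))) = C (c i) := by
      intro i k hik
      rw [my_pderiv_comm i k, ← h2 k i (Ne.symm hik), hc i]
    -- second derivatives of X k * L
    have hXL2 : ∀ i j k : Fin n, pderiv i (pderiv j (X k * ∑ m, C (c m) * X m))
        = pderiv j (X k) * C (c i) + pderiv i (X k) * C (c j) := by
      intro i j k
      rw [pderiv_mul, my_pderiv_linear, map_add, pderiv_mul, pderiv_mul, my_pderiv_linear,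
        pderiv_C, mul_zero, add_zero, my_pderiv_pderiv_X, zero_mul, zero_add]
    have hg2 : ∀ k i j : Fin n,
        pderiv i (pderiv j (D (X k) - X k * ∑ m, C (c m) * X m)) = 0 := by
      intro k i j
      rw [map_sub, map_sub, hXL2]
      by_cases hjk : j = k <;> by_cases hik : i = k
      · subst hjk; subst hik
        rw [F1 i, pderiv_X_self, one_mul]; ring
      · subst hjk
        rw [F2 i j hik, pderiv_X_self, one_mul, pderiv_X_of_ne (Ne.symm hik), zero_mul,
          add_zero, sub_self]
      · subst hik
        rw [my_pderiv_comm, F2 j i hjk, pderiv_X_of_ne (Ne.symm hjk), zero_mul, zero_add,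
          pderiv_X_self, one_mul, sub_self]
      · rw [h1 i j k hik hjk, pderiv_X_of_ne (Ne.symm hjk), pderiv_X_of_ne (Ne.symm hik),
          zero_mul, zero_mul, add_zero, sub_self]
    refine ⟨fun k => coeff 0 (D (X k) - X k * ∑ m, C (c m) * X m),
      fun k j => coeff 0 (pderiv j (D (X k) - X k * ∑ m, C (c m) * X m)), c, fun k => ?_⟩
    have haff := my_affine (D (X k) - X k * ∑ m, C (c m) * X m) (hg2 k)
    linear_combination haff
  · rintro ⟨a, b, c, hf⟩
    have hdf : ∀ j k : Fin n, pderiv j (D (X k))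
        = C (b k j) + (pderiv j (X k) * (∑ m, C (c m) * X m) + X k * C (c j)) := by
      intro j k
      rw [hf k, map_add, map_add, pderiv_C, pderiv_mul, my_pderiv_linear, my_pderiv_linear,
        zero_add]
    have hd2 : ∀ i j k : Fin n, pderiv i (pderiv j (D (X k)))
        = pderiv j (X k) * C (c i) + pderiv i (X k) * C (c j) := by
      intro i j k
      rw [hdf j k, map_add, pderiv_C, zero_add, map_add, pderiv_mul, pderiv_mul,
        my_pderiv_linear, pderiv_C, mul_zero, add_zero, my_pderiv_pderiv_X, zero_mul, zero_add]
    constructor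
    · intro i j k hik hjk
      rw [hd2, pderiv_X_of_ne (Ne.symm hjk), pderiv_X_of_ne (Ne.symm hik), zero_mul, zero_mul,
        add_zero]
    · intro i k hik
      rw [hd2, hd2, pderiv_X_self, pderiv_X_self, pderiv_X_of_ne hik, one_mul,
        zero_mul, zero_add]
      rw [← C_add, ← C_mul]
      congr 1
      field_simp
      ring
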